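/- Let f : [0, L] → [0, ∞) be a nonincreasing concave function with f(0) = 1, and let n ≥ 3 be an integer. Then ((n-1)/n) · (∫₀ᴸ f(x)^{n-2} dx)² ≥ ∫₀ᴸ x·f(x)^{n-2} dx. -/

import Mathlib

open MeasureTheory intervalIntegral Set

/-- Integral of a power of a linear function via FTC. -/
theorem chord_integral (x c : ℝ) (hx : 0 < x) (hc : c ≠ 1) (m : ℕ) (a b : ℝ) :
    ∫ s in a..b, (1 - s * ((1-c)/x)) ^ m
      = (x/((1-c)*(m+1))) *
        ((1 - a * ((1-c)/x))^(m+1) - (1 - b * ((1-c)/x))^(m+1)) := by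
  have hx0 : x ≠ 0 := ne_of_gt hx
  have hc0 : (1 - c) ≠ 0 := sub_ne_zero.mpr (Ne.symm hc)
  have hm2 : ((m:ℝ)+1) ≠ 0 := by positivity
  have hderiv : ∀ s : ℝ, HasDerivAt
      (fun s : ℝ => -(x/((1-c)*(m+1))) * (1 - s * ((1-c)/x)) ^ (m+1))
      ((1 - s * ((1-c)/x)) ^ m) s := by
    intro s
    have h1 : HasDerivAt (fun s : ℝ => 1 - s * ((1-c)/x)) (-((1-c)/x)) s := by
      simpa using ((hasDerivAt_id s).mul_const ((1-c)/x)).const_sub 1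
    have h2 := (h1.pow (m+1)).const_mul (-(x/((1-c)*(m+1))))
    refine h2.congr_deriv ?_
    simp only [Nat.add_sub_cancel]
    push_cast
    field_simp
  rw [intervalIntegral.integral_eq_sub_of_hasDerivAt (fun s _ => hderiv s)
    (by apply Continuous.intervalIntegrable; continuity)]
  ring

theorem keyA (L : ℝ) (hL : 0 < L) (f : ℝ → ℝ)
    (hconc : ConcaveOn ℝ (Set.Icc 0 L) f)
    (hmono : AntitoneOn f (Set.Icc 0 L))
    (hnonneg : ∀ x ∈ Set.Icc 0 L, 0 ≤ f x)
    (hf0 : f 0 = 1) (m : ℕ) (x : ℝ) (hx : x ∈ Set.Icc 0 L) :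
    (∫ t in x..L, f t ^ m) ≤ (∫ t in (0:ℝ)..L, f t ^ m) * f x ^ (m+1) := by
  have h0L : (0:ℝ) ∈ Icc (0:ℝ) L := ⟨le_rfl, hL.le⟩
  have hLL : L ∈ Icc (0:ℝ) L := ⟨hL.le, le_rfl⟩
  have hfle1 : ∀ y ∈ Icc (0:ℝ) L, f y ≤ 1 := fun y hy => hf0 ▸ hmono h0L hy hy.1
  have hanti : AntitoneOn (fun t => f t ^ m) (Icc (0:ℝ) L) :=
    fun a ha b hb hab => pow_le_pow_left₀ (hnonneg b hb) (hmono ha hb hab) m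
  have hint : ∀ a b, a ∈ Icc (0:ℝ) L → b ∈ Icc (0:ℝ) L →
      IntervalIntegrable (fun t => f t ^ m) volume a b := fun a b ha hb =>
    (hanti.mono (uIcc_subset_Icc ha hb)).intervalIntegrable
  have hsplit : (∫ t in (0:ℝ)..x, f t ^ m) + (∫ t in x..L, f t ^ m)
      = ∫ t in (0:ℝ)..L, f t ^ m :=
    integral_add_adjacent_intervals (hint 0 x h0L hx) (hint x L hx hLL)
  have hT_nonneg : 0 ≤ ∫ t in x..L, f t ^ m :=
    intervalIntegral.integral_nonneg hx.2
      (fun u hu => pow_nonneg (hnonneg u ⟨le_trans hx.1 hu.1, hu.2⟩) m)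
  have hF_nonneg : 0 ≤ ∫ t in (0:ℝ)..x, f t ^ m :=
    intervalIntegral.integral_nonneg hx.1
      (fun u hu => pow_nonneg (hnonneg u ⟨hu.1, le_trans hu.2 hx.2⟩) m)
  by_cases hc1 : f x = 1
  · rw [hc1]; simp only [one_pow, mul_one]
    nlinarith [hsplit, hF_nonneg]
  · have hc_lt : f x < 1 := lt_of_le_of_ne (hfle1 x hx) hc1
    have hx0 : 0 < x := by
      rcases eq_or_lt_of_le hx.1 with h | h
      · exact absurd (h ▸ hf0) hc1
      · exact h
    set c := f x with hc
    have hc0 : 0 ≤ c := hnonneg x hx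
    have hxne : x ≠ 0 := ne_of_gt hx0
    have hlow : ∀ s ∈ Icc (0:ℝ) x, 1 - s * ((1-c)/x) ≤ f s := by
      intro s hs
      have hb0 : 0 ≤ s / x := div_nonneg hs.1 hx0.le
      have hb1 : s / x ≤ 1 := (div_le_one hx0).mpr hs.2
      have := hconc.2 h0L hx (by linarith : (0:ℝ) ≤ 1 - s/x) hb0 (by ring)
      simp only [smul_eq_mul, mul_zero, zero_add, hf0] at this
      rw [div_mul_cancel₀ s hxne] at this
      calc 1 - s * ((1-c)/x) = (1 - s/x) * 1 + s/x * c := by field_simp; ring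
        _ ≤ f s := this
    have hupp : ∀ y ∈ Icc x L, f y ≤ 1 - y * ((1-c)/x) := by
      intro y hy
      have hy0 : 0 < y := lt_of_lt_of_le hx0 hy.1
      have hyL : y ∈ Icc (0:ℝ) L := ⟨hy0.le, hy.2⟩
      have hb0 : 0 ≤ x / y := div_nonneg hx0.le hy0.le
      have hb1 : x / y ≤ 1 := (div_le_one hy0).mpr hy.1
      have hcc := hconc.2 h0L hyL (by linarith : (0:ℝ) ≤ 1 - x/y) hb0 (by ring)
      simp only [smul_eq_mul, mul_zero, zero_add, hf0] at hcc
      rw [div_mul_cancel₀ x (ne_of_gt hy0)] at hcc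
      have h' : x / y * f y ≤ c - 1 + x / y := by linarith
      have h'' := mul_le_mul_of_nonneg_left h' (le_of_lt (div_pos hy0 hx0))
      calc f y = y/x * (x/y * f y) := by field_simp
        _ ≤ y/x * (c - 1 + x/y) := h''
        _ = 1 - y * ((1-c)/x) := by field_simp; ring
    set K := x/((1-c)*(m+1)) with hKdef
    have hKpos : 0 < K := by
      apply div_pos hx0
      have h1c : (0:ℝ) < 1 - c := by linarith
      positivity
    have hcontl : Continuous fun s : ℝ => (1 - s*((1-c)/x))^m := by continuity
    have hintl : ∀ a b : ℝ, IntervalIntegrable (fun s => (1 - s*((1-c)/x))^m) volume a b :=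
      fun a b => hcontl.intervalIntegrable a b
    have hlx : 1 - x * ((1-c)/x) = c := by field_simp; ring
    have hlL0 : 0 ≤ 1 - L * ((1-c)/x) := le_trans (hnonneg L hLL) (hupp L ⟨hx.2, le_rfl⟩)
    have hT_le : (∫ t in x..L, f t ^ m) ≤ K * (c^(m+1) - (1 - L*((1-c)/x))^(m+1)) := by
      have h1 : (∫ t in x..L, f t ^ m) ≤ ∫ s in x..L, (1 - s*((1-c)/x))^m :=
        integral_mono_on hx.2 (hint x L hx hLL) (hintl x L)
          (fun y hy => pow_le_pow_left₀ (hnonneg y ⟨le_trans hx.1 hy.1, hy.2⟩) (hupp y hy) m)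
      rwa [chord_integral x c hx0 hc1 m x L, hlx] at h1
    have hFx_ge : K * (1 - c^(m+1)) ≤ ∫ t in (0:ℝ)..x, f t ^ m := by
      have h1 : (∫ s in (0:ℝ)..x, (1 - s*((1-c)/x))^m) ≤ ∫ t in (0:ℝ)..x, f t ^ m := by
        apply integral_mono_on hx.1 (hintl 0 x) (hint 0 x h0L hx)
        intro s hs
        have hstep : s * ((1-c)/x) ≤ x * ((1-c)/x) :=
          mul_le_mul_of_nonneg_right hs.2 (div_nonneg (by linarith) hx0.le)
        have hxq : x * ((1-c)/x) = 1 - c := by field_simp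
        have hl0 : 0 ≤ 1 - s*((1-c)/x) := by rw [hxq] at hstep; linarith
        exact pow_le_pow_left₀ hl0 (hlow s hs) m
      rw [chord_integral x c hx0 hc1 m 0 x, hlx] at h1
      have h2 : (1 - (0:ℝ)*((1-c)/x))^(m+1) = 1 := by norm_num
      rw [h2] at h1
      exact h1
    have hcp0 : 0 ≤ c^(m+1) := pow_nonneg hc0 _
    have hcp1 : c^(m+1) ≤ 1 := pow_le_one₀ hc0 hc_lt.le
    have hl1p : 0 ≤ (1 - L*((1-c)/x))^(m+1) := pow_nonneg hlL0 _
    rw [← hsplit]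
    nlinarith [mul_le_mul_of_nonneg_right hFx_ge hcp0,
      mul_le_mul_of_nonneg_right hT_le (sub_nonneg.mpr hcp1),
      mul_nonneg (mul_nonneg hKpos.le hl1p) (sub_nonneg.mpr hcp1)]

theorem lemma1 (L : ℝ) (hL : 0 < L) (f : ℝ → ℝ)
    (hconc : ConcaveOn ℝ (Set.Icc 0 L) f)
    (hmono : AntitoneOn f (Set.Icc 0 L))
    (hnonneg : ∀ x ∈ Set.Icc 0 L, 0 ≤ f x)
    (hf0 : f 0 = 1) (n : ℕ) (hn : 3 ≤ n) :
    ((n : ℝ) - 1) / n * (∫ x in (0:ℝ)..L, f x ^ (n - 2)) ^ 2 ≥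
      ∫ x in (0:ℝ)..L, x * f x ^ (n - 2) := by
  set m : ℕ := n - 2 with hmdef
  have hm1 : 1 ≤ m := by omega
  have hnm : (n:ℝ) = (m:ℝ) + 2 := by
    have h : n = m + 2 := by omega
    rw [h]; push_cast; ring
  have h0L : (0:ℝ) ∈ Icc (0:ℝ) L := ⟨le_rfl, hL.le⟩
  have hLL : L ∈ Icc (0:ℝ) L := ⟨hL.le, le_rfl⟩
  have hanti : AntitoneOn (fun t => f t ^ m) (Icc (0:ℝ) L) :=
    fun a ha b hb hab => pow_le_pow_left₀ (hnonneg b hb) (hmono ha hb hab) m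
  have hint : ∀ a b, a ∈ Icc (0:ℝ) L → b ∈ Icc (0:ℝ) L →
      IntervalIntegrable (fun t => f t ^ m) volume a b := fun a b ha hb =>
    (hanti.mono (uIcc_subset_Icc ha hb)).intervalIntegrable
  set F : ℝ → ℝ := fun x => ∫ t in (0:ℝ)..x, f t ^ m with hFdef
  set I : ℝ := ∫ t in (0:ℝ)..L, f t ^ m with hIdef
  -- I > 0
  have hhalf : L/2 ∈ Icc (0:ℝ) L := ⟨by positivity, by linarith⟩
  have hfhalf : 1/2 ≤ f (L/2) := by
    have hcc := hconc.2 h0L hLL (by norm_num : (0:ℝ) ≤ 1/2) (by norm_num : (0:ℝ) ≤ 1/2)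
      (by norm_num)
    simp only [smul_eq_mul, mul_zero, zero_add, hf0] at hcc
    have h2 : (1:ℝ)/2 * L = L/2 := by ring
    rw [h2] at hcc
    nlinarith [hnonneg L hLL]
  have hIpos : 0 < I := by
    have hc1 : (0:ℝ) < (L/2) * f (L/2) ^ m := by
      have : (0:ℝ) < f (L/2) := by linarith
      positivity
    have hc2 : (L/2) * f (L/2) ^ m ≤ F (L/2) := by
      have hmono2 : ∀ t ∈ Icc (0:ℝ) (L/2), f (L/2) ^ m ≤ f t ^ m := fun t ht =>
        hanti ⟨ht.1, le_trans ht.2 hhalf.2⟩ hhalf ht.2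
      have := intervalIntegral.integral_mono_on (μ := volume) hhalf.1
        intervalIntegrable_const (hint 0 (L/2) h0L hhalf) hmono2
      simpa using this
    have hc3 : F (L/2) + (∫ t in (L/2)..L, f t ^ m) = I :=
      integral_add_adjacent_intervals (hint 0 (L/2) h0L hhalf) (hint (L/2) L hhalf hLL)
    have hc4 : 0 ≤ ∫ t in (L/2)..L, f t ^ m :=
      intervalIntegral.integral_nonneg hhalf.2
        (fun u hu => pow_nonneg (hnonneg u ⟨le_trans hhalf.1 hu.1, hu.2⟩) m)
    linarith
  -- continuity and differentiability of F
  have hfc : ContinuousOn f (Ioo 0 L) :=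
    (hconc.subset Ioo_subset_Icc_self (convex_Ioo 0 L)).continuousOn isOpen_Ioo
  have hgc : ContinuousOn (fun t => f t ^ m) (Ioo 0 L) := hfc.pow m
  have hFderiv : ∀ x ∈ Ioo (0:ℝ) L, HasDerivAt F (f x ^ m) x := by
    intro x hx
    exact intervalIntegral.integral_hasDerivAt_right (hint 0 x h0L ⟨hx.1.le, hx.2.le⟩)
      ⟨Ioo 0 L, isOpen_Ioo.mem_nhds hx, hgc.aestronglyMeasurable isOpen_Ioo.measurableSet⟩
      (hgc.continuousAt (isOpen_Ioo.mem_nhds hx))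
  have hFcont : ContinuousOn F (Icc (0:ℝ) L) := by
    have hio : IntegrableOn (fun t => f t ^ m) (uIcc 0 L) volume := by
      rw [uIcc_of_le hL.le]
      exact AntitoneOn.integrableOn_isCompact isCompact_Icc hanti
    have := intervalIntegral.continuousOn_primitive_interval hio
    rwa [uIcc_of_le hL.le] at this
  have hFcont' : ContinuousOn F (uIcc (0:ℝ) L) := by rwa [uIcc_of_le hL.le]
  have hFint : IntervalIntegrable F volume 0 L := hFcont'.intervalIntegrable
  have hJint : IntervalIntegrable (fun t => t * f t ^ m) volume 0 L :=
    (hint 0 L h0L hLL).continuousOn_mul continuousOn_id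
  -- integration by parts identity
  have hB : (∫ t in (0:ℝ)..L, (t * f t ^ m + F t)) = L * I := by
    have hd : ∀ x ∈ Ioo (0:ℝ) L,
        HasDerivWithinAt (fun t => t * F t) (x * f x ^ m + F x) (Ioi x) x := by
      intro x hx
      have hmul := (hasDerivAt_id x).mul (hFderiv x hx)
      simp only [id_eq, one_mul] at hmul
      have h2 : F x + x * f x ^ m = x * f x ^ m + F x := add_comm _ _
      rw [h2] at hmul
      exact hmul.hasDerivWithinAt
    have hcontH : ContinuousOn (fun t => t * F t) (Icc (0:ℝ) L) :=
      continuousOn_id.mul hFcont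
    have := integral_eq_sub_of_hasDeriv_right_of_le hL.le hcontH hd
      (hJint.add hFint)
    rw [this]
    have hF0 : F 0 = 0 := integral_same
    rw [hF0]; ring_nf; rfl
  have hJeq : (∫ t in (0:ℝ)..L, t * f t ^ m) = ∫ t in (0:ℝ)..L, (I - F t) := by
    rw [intervalIntegral.integral_add hJint hFint] at hB
    rw [intervalIntegral.integral_sub intervalIntegrable_const hFint,
      intervalIntegral.integral_const]
    simp only [smul_eq_mul, sub_zero]
    linarith
  -- key pointwise estimate
  have hIF : ∀ x ∈ Icc (0:ℝ) L, I - F x = ∫ t in x..L, f t ^ m := by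
    intro x hx
    have := integral_add_adjacent_intervals (hint 0 x h0L hx) (hint x L hx hLL)
    rw [hIdef, hFdef]
    linarith
  have hIF0 : ∀ x ∈ Icc (0:ℝ) L, 0 ≤ I - F x := by
    intro x hx
    rw [hIF x hx]
    exact intervalIntegral.integral_nonneg hx.2
      (fun u hu => pow_nonneg (hnonneg u ⟨le_trans hx.1 hu.1, hu.2⟩) m)
  have hkey : ∀ x ∈ Icc (0:ℝ) L, I - F x ≤ I * f x ^ (m+1) := by
    intro x hx
    rw [hIF x hx]
    exact keyA L hL f hconc hmono hnonneg hf0 m x hx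
  -- exponents
  set p : ℝ := ((m:ℝ)+2)/((m:ℝ)+1) with hpdef
  set q : ℝ := (m:ℝ)/((m:ℝ)+1) with hqdef
  set r : ℝ := 1/((m:ℝ)+1) with hrdef
  have hm0 : (0:ℝ) < (m:ℝ) + 1 := by positivity
  have hm2 : (0:ℝ) < (m:ℝ) + 2 := by positivity
  have hp1 : 1 ≤ p := by rw [hpdef]; rw [le_div_iff₀ hm0]; linarith
  have hq0 : 0 ≤ q := by positivity
  have hr0 : 0 ≤ r := by positivity
  have hqr : q + r = 1 := by rw [hqdef, hrdef]; field_simp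
  have hpr : p - 1 = r := by rw [hpdef, hrdef]; field_simp; ring
  -- pointwise Hölder-type bound
  have hpt : ∀ x ∈ Icc (0:ℝ) L, I - F x ≤ I ^ q * ((I - F x) ^ r * f x ^ m) := by
    intro x hx
    have hfx0 : 0 ≤ f x := hnonneg x hx
    have hu0 : 0 ≤ I - F x := hIF0 x hx
    rcases eq_or_lt_of_le hu0 with h | h
    · rw [← h]
      have : (0:ℝ) ≤ I ^ q * ((0:ℝ) ^ r * f x ^ m) :=
        mul_nonneg (Real.rpow_nonneg hIpos.le q)
          (mul_nonneg (Real.rpow_nonneg le_rfl r) (pow_nonneg hfx0 m))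
      simpa using this
    · have h1 : (I - F x) ^ q ≤ (I * f x ^ (m+1)) ^ q :=
        Real.rpow_le_rpow hu0 (hkey x hx) hq0
      have h2 : (I * f x ^ (m+1)) ^ q = I ^ q * f x ^ m := by
        rw [Real.mul_rpow hIpos.le (pow_nonneg hfx0 _)]
        congr 1
        rw [← Real.rpow_natCast (f x) (m+1), ← Real.rpow_mul hfx0]
        have : ((m+1 : ℕ):ℝ) * q = (m:ℝ) := by
          push_cast
          rw [hqdef]; field_simp
        rw [this, Real.rpow_natCast]
      calc I - F x = (I - F x) ^ q * (I - F x) ^ r := by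
            rw [← Real.rpow_add h, hqr, Real.rpow_one]
        _ ≤ (I ^ q * f x ^ m) * (I - F x) ^ r := by
            apply mul_le_mul_of_nonneg_right _ (Real.rpow_nonneg hu0 r)
            rw [← h2]; exact h1
        _ = I ^ q * ((I - F x) ^ r * f x ^ m) := by ring
  -- FTC for the rpow primitive
  have hrpow_cont : Continuous (fun u : ℝ => u ^ r) := Real.continuous_rpow_const hr0
  have hGcont : ContinuousOn (fun x => (I - F x) ^ r) (uIcc (0:ℝ) L) :=
    hrpow_cont.comp_continuousOn (continuousOn_const.sub hFcont')
  have hGint : IntervalIntegrable (fun x => (I - F x) ^ r * f x ^ m) volume 0 L :=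
    (hint 0 L h0L hLL).continuousOn_mul hGcont
  have hGftc : (∫ x in (0:ℝ)..L, (I - F x) ^ r * f x ^ m)
      = ((m:ℝ)+1)/((m:ℝ)+2) * I ^ p := by
    have hppos : (0:ℝ) < p := lt_of_lt_of_le one_pos hp1
    have hcontg : ContinuousOn
        (fun x => -(((m:ℝ)+1)/((m:ℝ)+2)) * (I - F x) ^ p) (Icc (0:ℝ) L) := by
      apply continuousOn_const.mul
      have : Continuous (fun u : ℝ => u ^ p) := Real.continuous_rpow_const hppos.le
      have h2 : ContinuousOn (fun x => (I - F x) ^ p) (Icc (0:ℝ) L) :=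
        this.comp_continuousOn (continuousOn_const.sub hFcont)
      exact h2
    have hd : ∀ x ∈ Ioo (0:ℝ) L, HasDerivWithinAt
        (fun x => -(((m:ℝ)+1)/((m:ℝ)+2)) * (I - F x) ^ p)
        ((I - F x) ^ r * f x ^ m) (Ioi x) x := by
      intro x hx
      have hd0 : HasDerivAt (fun y => I - F y) (-(f x ^ m)) x :=
        HasDerivAt.const_sub I (hFderiv x hx)
      have hd1 := (hd0.rpow_const (Or.inr hp1)).const_mul (-(((m:ℝ)+1)/((m:ℝ)+2)))
      have heq : -(((m:ℝ)+1)/((m:ℝ)+2)) * (-(f x ^ m) * p * (I - F x) ^ (p-1))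
          = (I - F x) ^ r * f x ^ m := by
        rw [hpr, hpdef]
        field_simp
      rw [heq] at hd1
      exact hd1.hasDerivWithinAt
    have := integral_eq_sub_of_hasDeriv_right_of_le hL.le hcontg hd hGint
    rw [this]
    have hFL : F L = I := rfl
    have hF0 : F 0 = 0 := integral_same
    rw [hFL, hF0, sub_self, sub_zero]
    rw [Real.zero_rpow (by positivity : p ≠ 0)]
    ring
  -- assemble
  have hmain : (∫ t in (0:ℝ)..L, t * f t ^ m) ≤ ((m:ℝ)+1)/((m:ℝ)+2) * I ^ 2 := by
    have hstep1 : (∫ t in (0:ℝ)..L, (I - F t))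
        ≤ ∫ t in (0:ℝ)..L, I ^ q * ((I - F t) ^ r * f t ^ m) := by
      apply intervalIntegral.integral_mono_on hL.le
        (intervalIntegrable_const.sub hFint) (hGint.const_mul _) hpt
    rw [intervalIntegral.integral_const_mul, hGftc] at hstep1
    have hIq : I ^ q * (((m:ℝ)+1)/((m:ℝ)+2) * I ^ p)
        = ((m:ℝ)+1)/((m:ℝ)+2) * I ^ 2 := by
      rw [show I ^ q * (((m:ℝ)+1)/((m:ℝ)+2) * I ^ p)
          = ((m:ℝ)+1)/((m:ℝ)+2) * (I ^ q * I ^ p) by ring]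
      congr 1
      rw [← Real.rpow_add hIpos]
      have h2 : q + p = ((2:ℕ):ℝ) := by
        rw [hqdef, hpdef]; push_cast; field_simp; ring
      rw [h2, Real.rpow_natCast]
    rw [hIq] at hstep1
    rw [hJeq]
    exact hstep1
  rw [ge_iff_le, hnm]
  have h3 : ((m:ℝ) + 2 - 1) / ((m:ℝ) + 2) = ((m:ℝ)+1)/((m:ℝ)+2) := by ring_nf
  rw [h3]
  exact hmain
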